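/- Assume Σ_{n≥1} ‖E₀(S_n)‖ / n^{3/2} < ∞. Then there is a universal constant c > 0 such that for every positive integer a, (1/√a) · Σ_{k=1}^{∞} ‖E₀(S_{ak})‖ / k^{3/2} ≤ c · Σ_{l≥a} ‖E₀(S_l)‖ / l^{3/2}. -/

import Mathlib

open MeasureTheory Filter Finset
open scoped ENNReal Topology

set_option maxHeartbeats 1000000 in
lemma stmt17_analytic (h : ℕ → ℝ) (h0 : ∀ n, 0 ≤ h n)
    (hB : ∀ n m : ℕ, h n ≤ h (n + m) + h m)
    (hsum : Summable fun n : ℕ => h (n + 1) / ((n : ℝ) + 1) ^ (3 / 2 : ℝ)) :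
    ∃ c > (0 : ℝ), ∀ a : ℕ, 1 ≤ a →
      (1 / Real.sqrt a) * ∑' k : ℕ, h (a * (k + 1)) / ((k : ℝ) + 1) ^ (3 / 2 : ℝ) ≤
        c * ∑' l : ℕ, h (a + l) / ((a : ℝ) + l) ^ (3 / 2 : ℝ) := by
  have hZs : Summable fun k : ℕ => 1 / ((k : ℝ) + 1) ^ (3 / 2 : ℝ) := by
    have h1 : Summable (fun n : ℕ => 1 / (n : ℝ) ^ (3 / 2 : ℝ)) :=
      Real.summable_one_div_nat_rpow.mpr (by norm_num)
    have := (summable_nat_add_iff 1).2 h1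
    refine this.congr fun k => ?_
    push_cast
    ring_nf
  set Z : ℝ := ∑' k : ℕ, 1 / ((k : ℝ) + 1) ^ (3 / 2 : ℝ) with hZdef
  have hZ0 : 0 ≤ Z := tsum_nonneg fun k => by positivity
  refine ⟨(2 : ℝ) ^ (3 / 2 : ℝ) + 4 * 3 ^ (3 / 2 : ℝ) * Z + 1, by positivity, ?_⟩
  intro a ha
  have ra : (0 : ℝ) < a := by exact_mod_cast Nat.lt_of_lt_of_le Nat.zero_lt_one ha
  set v : ℕ → ℝ := fun l => h (a + l) / ((a : ℝ) + l) ^ (3 / 2 : ℝ) with hvdef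
  have hv0 : ∀ l, 0 ≤ v l := fun l => div_nonneg (h0 _) (Real.rpow_nonneg (by positivity) _)
  have hvsum : Summable v := by
    have := (summable_nat_add_iff (a - 1)).2 hsum
    refine this.congr fun l => ?_
    have h1 : l + (a - 1) + 1 = a + l := by omega
    have h2 : ((l + (a - 1) : ℕ) : ℝ) + 1 = (a : ℝ) + l := by
      have : ((a - 1 : ℕ) : ℝ) = (a : ℝ) - 1 := by
        push_cast [Nat.cast_sub ha]; ring
      push_cast [this]; ring
    rw [h1, h2]
  set R : ℝ := ∑' l, v l with hRdef
  have hR0 : 0 ≤ R := tsum_nonneg hv0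
  -- pointwise block bound
  have H1 : ∀ n : ℕ, (a : ℝ) * h n ≤ (∑ j ∈ range a, h (n + j)) + ∑ j ∈ range a, h j := by
    intro n
    calc (a : ℝ) * h n = ∑ _j ∈ range a, h n := by
          rw [Finset.sum_const, card_range, nsmul_eq_mul]
      _ ≤ ∑ j ∈ range a, (h (n + j) + h j) := Finset.sum_le_sum fun j _ => hB n j
      _ = _ := Finset.sum_add_distrib
  set W : ℝ := ∑ j ∈ range (2 * a), h (a + j) with hWdef
  have HB : ∑ j ∈ range a, h j ≤ 4 * W := by
    have s1 : ∑ j ∈ range a, h j ≤ (∑ j ∈ range a, h (a + j)) + (a : ℝ) * h a := by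
      calc ∑ j ∈ range a, h j ≤ ∑ j ∈ range a, (h (a + j) + h a) :=
            Finset.sum_le_sum fun j _ => by
              have := hB j a
              rwa [add_comm j a] at this
        _ = (∑ j ∈ range a, h (a + j)) + (a : ℝ) * h a := by
            rw [Finset.sum_add_distrib, Finset.sum_const, card_range, nsmul_eq_mul]
    have s2 : (2 * a : ℝ) * h a ≤ W + ∑ j ∈ range (2 * a), h j := by
      calc (2 * a : ℝ) * h a = ∑ _j ∈ range (2 * a), h a := by
            rw [Finset.sum_const, card_range, nsmul_eq_mul]; push_cast; ring
        _ ≤ ∑ j ∈ range (2 * a), (h (a + j) + h j) := Finset.sum_le_sum fun j _ => hB a j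
        _ = _ := by rw [Finset.sum_add_distrib]
    have s3 : ∑ j ∈ range (2 * a), h j = (∑ j ∈ range a, h j) + ∑ j ∈ range a, h (a + j) := by
      rw [two_mul, Finset.sum_range_add]
    have s4 : ∑ j ∈ range a, h (a + j) ≤ W := by
      refine Finset.sum_le_sum_of_subset_of_nonneg ?_ fun j _ _ => h0 _
      exact Finset.range_subset_range.2 (by omega)
    linarith
  have HW : W ≤ (3 * (a : ℝ)) ^ (3 / 2 : ℝ) * R := by
    have hWv : W = ∑ j ∈ range (2 * a), v j * ((a : ℝ) + j) ^ (3 / 2 : ℝ) := by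
      refine Finset.sum_congr rfl fun j _ => ?_
      rw [hvdef]
      field_simp
    calc W = ∑ j ∈ range (2 * a), v j * ((a : ℝ) + j) ^ (3 / 2 : ℝ) := hWv
      _ ≤ ∑ j ∈ range (2 * a), v j * (3 * (a : ℝ)) ^ (3 / 2 : ℝ) := by
          refine Finset.sum_le_sum fun j hj => ?_
          refine mul_le_mul_of_nonneg_left ?_ (hv0 j)
          refine Real.rpow_le_rpow (by positivity) ?_ (by norm_num)
          have : (j : ℝ) ≤ 2 * a := by
            have := Finset.mem_range.1 hj
            exact_mod_cast this.le.trans (le_refl _)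
          linarith
      _ = (3 * (a : ℝ)) ^ (3 / 2 : ℝ) * ∑ j ∈ range (2 * a), v j := by
          rw [← Finset.sum_mul]; ring
      _ ≤ (3 * (a : ℝ)) ^ (3 / 2 : ℝ) * R := by
          refine mul_le_mul_of_nonneg_left ?_ (by positivity)
          exact Summable.sum_le_tsum _ (fun i _ => hv0 i) hvsum
  set f : ℕ → ℝ := fun k => (1 / Real.sqrt a) * (h (a * (k + 1)) / ((k : ℝ) + 1) ^ (3 / 2 : ℝ))
    with hfdef
  set g : ℕ → ℝ := fun k => (2 : ℝ) ^ (3 / 2 : ℝ) * ∑ j ∈ range a, v (a * k + j) with hgdef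
  set d : ℕ → ℝ := fun k => (4 * 3 ^ (3 / 2 : ℝ) * R) * (1 / ((k : ℝ) + 1) ^ (3 / 2 : ℝ))
    with hddef
  have key : ∀ k : ℕ, f k ≤ g k + d k := by
    intro k
    set K : ℝ := (a : ℝ) * ((k : ℝ) + 1) with hKdef
    have hKpos : 0 < K := by positivity
    have hk1 : (0 : ℝ) < ((k : ℝ) + 1) ^ (3 / 2 : ℝ) := by positivity
    have hKpow : K ^ (3 / 2 : ℝ)
        = (a : ℝ) * Real.sqrt a * ((k : ℝ) + 1) ^ (3 / 2 : ℝ) := by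
      rw [hKdef, Real.mul_rpow ra.le (by positivity)]
      congr 1
      rw [show (3 / 2 : ℝ) = 1 + 1 / 2 by norm_num, Real.rpow_add ra, Real.rpow_one,
        Real.sqrt_eq_rpow]
    have hsq : (0 : ℝ) < Real.sqrt a := Real.sqrt_pos.2 ra
    have hKp : (0 : ℝ) < K ^ (3 / 2 : ℝ) := by positivity
    have step1 : f k = ((a : ℝ) * h (a * (k + 1))) / K ^ (3 / 2 : ℝ) := by
      rw [hfdef, hKpow]
      field_simp
    have hnum : (a : ℝ) * h (a * (k + 1)) ≤
        (∑ j ∈ range a, h (a * (k + 1) + j)) + 4 * (3 * (a : ℝ)) ^ (3 / 2 : ℝ) * R := by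
      have := H1 (a * (k + 1))
      nlinarith [HB, HW]
    have step3 : (∑ j ∈ range a, h (a * (k + 1) + j)) / K ^ (3 / 2 : ℝ) ≤ g k := by
      rw [Finset.sum_div, hgdef]
      dsimp only
      rw [Finset.mul_sum]
      refine Finset.sum_le_sum fun j hj => ?_
      have hj' : j < a := Finset.mem_range.1 hj
      have hidx : a + (a * k + j) = a * (k + 1) + j := by ring
      have hvj : v (a * k + j) = h (a * (k + 1) + j) / ((a : ℝ) + (a * k + j : ℕ)) ^ (3 / 2 : ℝ) := by
        rw [hvdef]; dsimp only; rw [hidx]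
      set D : ℝ := (a : ℝ) + ((a * k + j : ℕ) : ℝ) with hDdef
      have hDK : D = K + j := by rw [hDdef, hKdef]; push_cast; ring
      have hDpos : 0 < D := by rw [hDK]; positivity
      have hjK : (j : ℝ) ≤ K := by
        rw [hKdef]
        have h1 : (j : ℝ) ≤ (a : ℝ) := by exact_mod_cast hj'.le
        nlinarith [Nat.cast_nonneg (α := ℝ) k]
      have hD2K : D ≤ 2 * K := by rw [hDK]; linarith
      have hDle : D ^ (3 / 2 : ℝ) ≤ 2 ^ (3 / 2 : ℝ) * K ^ (3 / 2 : ℝ) := by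
        rw [← Real.mul_rpow (by norm_num) hKpos.le]
        exact Real.rpow_le_rpow hDpos.le hD2K (by norm_num)
      have hDp : (0 : ℝ) < D ^ (3 / 2 : ℝ) := Real.rpow_pos_of_pos hDpos _
      rw [hvj, ← mul_div_assoc, div_le_div_iff₀ hKp hDp]
      calc h (a * (k + 1) + j) * D ^ (3 / 2 : ℝ)
          ≤ h (a * (k + 1) + j) * (2 ^ (3 / 2 : ℝ) * K ^ (3 / 2 : ℝ)) :=
            mul_le_mul_of_nonneg_left hDle (h0 _)
        _ = 2 ^ (3 / 2 : ℝ) * h (a * (k + 1) + j) * K ^ (3 / 2 : ℝ) := by ring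
    have step4 : (4 * (3 * (a : ℝ)) ^ (3 / 2 : ℝ) * R) / K ^ (3 / 2 : ℝ) = d k := by
      rw [hddef]
      dsimp only
      have h3a : (3 * (a : ℝ)) ^ (3 / 2 : ℝ) = 3 ^ (3 / 2 : ℝ) * (a : ℝ) ^ (3 / 2 : ℝ) :=
        Real.mul_rpow (by norm_num) ra.le
      have hK2 : K ^ (3 / 2 : ℝ) = (a : ℝ) ^ (3 / 2 : ℝ) * ((k : ℝ) + 1) ^ (3 / 2 : ℝ) := by
        rw [hKdef, Real.mul_rpow ra.le (by positivity)]
      have hap : (0 : ℝ) < (a : ℝ) ^ (3 / 2 : ℝ) := Real.rpow_pos_of_pos ra _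
      rw [h3a, hK2]
      field_simp
    calc f k = ((a : ℝ) * h (a * (k + 1))) / K ^ (3 / 2 : ℝ) := step1
      _ ≤ ((∑ j ∈ range a, h (a * (k + 1) + j)) + 4 * (3 * (a : ℝ)) ^ (3 / 2 : ℝ) * R) /
          K ^ (3 / 2 : ℝ) := by gcongr
      _ = (∑ j ∈ range a, h (a * (k + 1) + j)) / K ^ (3 / 2 : ℝ) +
          (4 * (3 * (a : ℝ)) ^ (3 / 2 : ℝ) * R) / K ^ (3 / 2 : ℝ) := add_div _ _ _
      _ ≤ g k + d k := add_le_add step3 (le_of_eq step4)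
  -- summability
  have hinner : ∀ j, Summable fun k : ℕ => v (a * k + j) := by
    intro j
    refine hvsum.comp_injective fun x y hxy => ?_
    have : a * x = a * y := by omega
    exact Nat.eq_of_mul_eq_mul_left (by omega) this
  have hgs_inner : Summable fun k : ℕ => ∑ j ∈ range a, v (a * k + j) :=
    summable_sum fun j _ => hinner j
  have hg_s : Summable g := hgs_inner.mul_left _
  have hd_s : Summable d := hZs.mul_left _
  have hf0 : ∀ k, 0 ≤ f k := fun k =>
    mul_nonneg (by positivity) (div_nonneg (h0 _) (Real.rpow_nonneg (by positivity) _))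
  have hf_s : Summable f := Summable.of_nonneg_of_le hf0 key (hg_s.add hd_s)
  -- the inner double sum is at most R
  have hinnerR : ∑' k : ℕ, (∑ j ∈ range a, v (a * k + j)) ≤ R := by
    refine Summable.tsum_le_of_sum_le hgs_inner fun s => ?_
    have hrw : ∑ k ∈ s, ∑ j ∈ range a, v (a * k + j)
        = ∑ p ∈ s ×ˢ range a, v (a * p.1 + p.2) := by
      rw [Finset.sum_product]
    have hinj : Set.InjOn (fun p : ℕ × ℕ => a * p.1 + p.2) (s ×ˢ range a) := by
      intro p hp q hq hpq
      simp only [Finset.coe_product, Set.mem_prod, Finset.mem_coe, Finset.mem_range] at hp hq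
      have h1 : p.1 = q.1 := by
        have e1 : (a * p.1 + p.2) / a = p.1 := by
          rw [Nat.mul_add_div (by omega)]
          simp [Nat.div_eq_of_lt hp.2]
        have e2 : (a * q.1 + q.2) / a = q.1 := by
          rw [Nat.mul_add_div (by omega)]
          simp [Nat.div_eq_of_lt hq.2]
        simp only at hpq
        rw [← e1, ← e2, hpq]
      have h2 : p.2 = q.2 := by
        have := hpq
        simp only at this
        rw [h1] at this
        omega
      exact Prod.ext h1 h2
    have hrw2 : ∑ p ∈ s ×ˢ range a, v (a * p.1 + p.2)
        = ∑ n ∈ (s ×ˢ range a).image (fun p : ℕ × ℕ => a * p.1 + p.2), v n := by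
      rw [Finset.sum_image fun p hp q hq => hinj (by exact_mod_cast hp) (by exact_mod_cast hq)]
    rw [hrw, hrw2]
    exact Summable.sum_le_tsum _ (fun i _ => hv0 i) hvsum
  -- put it together
  have lhs_eq : (1 / Real.sqrt a) * ∑' k : ℕ, h (a * (k + 1)) / ((k : ℝ) + 1) ^ (3 / 2 : ℝ)
      = ∑' k, f k := by
    rw [hfdef, tsum_mul_left]
  rw [lhs_eq]
  have main : ∑' k, f k ≤ 2 ^ (3 / 2 : ℝ) * R + 4 * 3 ^ (3 / 2 : ℝ) * R * Z := by
    calc ∑' k, f k ≤ ∑' k, (g k + d k) := Summable.tsum_le_tsum key hf_s (hg_s.add hd_s)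
      _ = (∑' k, g k) + ∑' k, d k := Summable.tsum_add hg_s hd_s
      _ ≤ 2 ^ (3 / 2 : ℝ) * R + 4 * 3 ^ (3 / 2 : ℝ) * R * Z := by
          have hg_t : ∑' k, g k ≤ 2 ^ (3 / 2 : ℝ) * R := by
            rw [hgdef, tsum_mul_left]
            exact mul_le_mul_of_nonneg_left hinnerR (by positivity)
          have hd_t : ∑' k, d k = 4 * 3 ^ (3 / 2 : ℝ) * R * Z := by
            rw [hddef, tsum_mul_left, hZdef]
          linarith
  have : (2 : ℝ) ^ (3 / 2 : ℝ) * R + 4 * 3 ^ (3 / 2 : ℝ) * R * Z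
      ≤ ((2 : ℝ) ^ (3 / 2 : ℝ) + 4 * 3 ^ (3 / 2 : ℝ) * Z + 1) * R := by nlinarith
  linarith

section aux
variable {Ω : Type*}

/-- L² contraction of conditional expectation. -/
lemma stmt17_condexp_L2_le {m : MeasurableSpace Ω} [m0 : MeasurableSpace Ω] {μ : Measure Ω}
    [IsFiniteMeasure μ] (hm : m ≤ m0) {f : Ω → ℝ}
    (hf : MemLp f 2 μ) : eLpNorm (μ[f|m]) 2 μ ≤ eLpNorm f 2 μ := by
  have hfi : Integrable f μ := hf.integrable one_le_two
  have h1 : (condExpL2 ℝ ℝ hm (hf.toLp f) : Ω → ℝ) =ᵐ[μ] μ[f|m] := by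
    refine ae_eq_condExp_of_forall_setIntegral_eq hm hfi ?_ ?_ ?_
    · intro s _ hμs
      exact integrableOn_condExpL2_of_measure_ne_top hm hμs.ne _
    · intro s hs hμs
      rw [integral_condExpL2_eq hm (hf.toLp f) hs hμs.ne]
      exact setIntegral_congr_ae (hm s hs) ((hf.coeFn_toLp).mono fun x hx _ => hx)
    · exact aestronglyMeasurable_condExpL2 hm _
  calc eLpNorm (μ[f|m]) 2 μ
      = eLpNorm (condExpL2 ℝ ℝ hm (hf.toLp f) : Ω → ℝ) 2 μ := (eLpNorm_congr_ae h1).symm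
    _ ≤ eLpNorm (hf.toLp f : Ω → ℝ) 2 μ := eLpNorm_condExpL2_le hm _
    _ = eLpNorm f 2 μ := eLpNorm_congr_ae hf.coeFn_toLp

lemma stmt17_condexp_memL2 {m : MeasurableSpace Ω} [m0 : MeasurableSpace Ω] {μ : Measure Ω}
    [IsFiniteMeasure μ] (hm : m ≤ m0) {f : Ω → ℝ}
    (hf : MemLp f 2 μ) : MemLp (μ[f|m]) 2 μ := by
  have hsm : StronglyMeasurable[m] (μ[f|m]) := stronglyMeasurable_condExp
  exact ⟨(hsm.mono hm).aestronglyMeasurable,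
    lt_of_le_of_lt (stmt17_condexp_L2_le hm hf) hf.2⟩

/-- Main probabilistic inequality: two-sided subadditivity of `n ↦ ‖E₀(S n)‖₂`. -/
lemma stmt17_key {F0 : MeasurableSpace Ω} [m0 : MeasurableSpace Ω] {μ : Measure Ω}
    [IsProbabilityMeasure μ]
    (T : Ω ≃ᵐ Ω) (hT : MeasurePreserving T μ μ)
    (hF0 : F0 ≤ m0) (hF0T : F0 ≤ F0.comap T)
    {X0 : Ω → ℝ} (hX0L2 : MemLp X0 2 μ)
    (S : ℕ → Ω → ℝ) (hS : ∀ n ω, S n ω = ∑ i ∈ Finset.range n, X0 ((⇑T)^[i] ω))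
    (n m : ℕ) :
    (eLpNorm (μ[S n|F0]) 2 μ).toReal ≤
      (eLpNorm (μ[S (n + m)|F0]) 2 μ).toReal + (eLpNorm (μ[S m|F0]) 2 μ).toReal := by
  have hTn : ∀ k, MeasurePreserving ((⇑T)^[k]) μ μ := fun k => hT.iterate k
  have hemb : ∀ k, MeasurableEmbedding ((⇑T)^[k]) := by
    intro k; induction k with
    | zero => simpa using MeasurableEmbedding.id
    | succ k ih =>
        rw [Function.iterate_succ']
        exact T.measurableEmbedding.comp ih
  have hSmem : ∀ k, MemLp (S k) 2 μ := by
    intro k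
    have h1 : MemLp (fun ω => ∑ i ∈ Finset.range k, X0 ((⇑T)^[i] ω)) 2 μ :=
      memLp_finsetSum (f := fun i ω => X0 ((⇑T)^[i] ω)) (Finset.range k)
        (fun i _ => hX0L2.comp_measurePreserving (hTn i))
    exact (funext (hS k) : S k = _) ▸ h1
  have hSint : ∀ k, Integrable (S k) μ := fun k => (hSmem k).integrable one_le_two
  have hF0Fn : ∀ k, F0 ≤ MeasurableSpace.comap ((⇑T)^[k]) F0 := by
    intro k; induction k with
    | zero => simp
    | succ k ih =>
        calc F0 ≤ F0.comap T := hF0T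
          _ ≤ (MeasurableSpace.comap ((⇑T)^[k]) F0).comap T := MeasurableSpace.comap_mono ih
          _ = MeasurableSpace.comap ((⇑T)^[k + 1]) F0 := by
              rw [MeasurableSpace.comap_comp, ← Function.iterate_succ]
  have hFnm0 : ∀ k, MeasurableSpace.comap ((⇑T)^[k]) F0 ≤ m0 := fun k =>
    le_trans (MeasurableSpace.comap_mono hF0) (hTn k).measurable.comap_le
  have hdecomp : S (n + m) = S n + S m ∘ (⇑T)^[n] := by
    funext ω
    simp only [Pi.add_apply, Function.comp_apply, hS]
    rw [Finset.sum_range_add]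
    congr 1
    refine Finset.sum_congr rfl fun i _ => ?_
    rw [add_comm n i, Function.iterate_add_apply]
  have hcompmem : MemLp (S m ∘ (⇑T)^[n]) 2 μ := (hSmem m).comp_measurePreserving (hTn n)
  -- the shifted term has smaller conditional L² norm
  have hshift : eLpNorm (μ[S m ∘ (⇑T)^[n]|F0]) 2 μ ≤ eLpNorm (μ[S m|F0]) 2 μ := by
    have hTmeas : @Measurable Ω Ω (MeasurableSpace.comap ((⇑T)^[n]) F0) F0 ((⇑T)^[n]) :=
      Measurable.of_comap_le le_rfl
    have hq : MemLp (μ[S m|F0]) 2 μ := stmt17_condexp_memL2 hF0 (hSmem m)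
    have hcompq : MemLp ((μ[S m|F0]) ∘ (⇑T)^[n]) 2 μ := hq.comp_measurePreserving (hTn n)
    have hA : ((μ[S m|F0]) ∘ (⇑T)^[n]) =ᵐ[μ] μ[S m ∘ (⇑T)^[n]|MeasurableSpace.comap ((⇑T)^[n]) F0] := by
      refine ae_eq_condExp_of_forall_setIntegral_eq (hFnm0 n)
        (hcompmem.integrable one_le_two) ?_ ?_ ?_
      · intro s _ _
        exact (hcompq.integrable one_le_two).integrableOn
      · rintro s ⟨B, hB, rfl⟩ _
        simp only [Function.comp_apply]
        rw [(hTn n).setIntegral_preimage_emb (hemb n), (hTn n).setIntegral_preimage_emb (hemb n)]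
        exact setIntegral_condExp hF0 (hSint m) hB
      · exact (stronglyMeasurable_condExp.comp_measurable hTmeas).aestronglyMeasurable
    have hB2 : μ[S m ∘ (⇑T)^[n]|F0] =ᵐ[μ] μ[μ[S m ∘ (⇑T)^[n]|MeasurableSpace.comap ((⇑T)^[n]) F0]|F0] :=
      (condExp_condExp_of_le (hF0Fn n) (hFnm0 n)).symm
    have hZmem : MemLp (μ[S m ∘ (⇑T)^[n]|MeasurableSpace.comap ((⇑T)^[n]) F0]) 2 μ := (memLp_congr_ae hA).mp hcompq
    calc eLpNorm (μ[S m ∘ (⇑T)^[n]|F0]) 2 μ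
        = eLpNorm (μ[μ[S m ∘ (⇑T)^[n]|MeasurableSpace.comap ((⇑T)^[n]) F0]|F0]) 2 μ := eLpNorm_congr_ae hB2
      _ ≤ eLpNorm (μ[S m ∘ (⇑T)^[n]|MeasurableSpace.comap ((⇑T)^[n]) F0]) 2 μ := stmt17_condexp_L2_le hF0 hZmem
      _ = eLpNorm ((μ[S m|F0]) ∘ (⇑T)^[n]) 2 μ := (eLpNorm_congr_ae hA).symm
      _ = eLpNorm (μ[S m|F0]) 2 μ :=
          eLpNorm_comp_measurePreserving hq.aestronglyMeasurable (hTn n)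
  have hcondadd : μ[S (n + m)|F0] =ᵐ[μ] μ[S n|F0] + μ[S m ∘ (⇑T)^[n]|F0] := by
    rw [hdecomp]
    exact condExp_add (hSint n) (hcompmem.integrable one_le_two) F0
  have hsubeq : μ[S n|F0] =ᵐ[μ] μ[S (n + m)|F0] - μ[S m ∘ (⇑T)^[n]|F0] := by
    filter_upwards [hcondadd] with ω hω
    simp only [Pi.add_apply] at hω
    simp only [Pi.sub_apply]
    linarith
  have hmeas : ∀ (g : Ω → ℝ), AEStronglyMeasurable (μ[g|F0]) μ := fun g =>
    (stronglyMeasurable_condExp.mono hF0).aestronglyMeasurable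
  have tri : eLpNorm (μ[S n|F0]) 2 μ ≤
      eLpNorm (μ[S (n + m)|F0]) 2 μ + eLpNorm (μ[S m ∘ (⇑T)^[n]|F0]) 2 μ := by
    rw [eLpNorm_congr_ae hsubeq]
    exact eLpNorm_sub_le (hmeas _) (hmeas _) one_le_two
  have tri2 : eLpNorm (μ[S n|F0]) 2 μ ≤
      eLpNorm (μ[S (n + m)|F0]) 2 μ + eLpNorm (μ[S m|F0]) 2 μ :=
    tri.trans (add_le_add_right hshift _)
  have hfin : ∀ k, eLpNorm (μ[S k|F0]) 2 μ ≠ ∞ := fun k =>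
    (stmt17_condexp_memL2 hF0 (hSmem k)).2.ne
  have := ENNReal.toReal_mono (by
      exact ENNReal.add_ne_top.2 ⟨hfin (n + m), hfin m⟩) tri2
  rwa [ENNReal.toReal_add (hfin (n + m)) (hfin m)] at this

end aux

/-- (Subadditivity lemma.) If `∑_{n≥1} ‖E₀(S_n)‖/n^{3/2} < ∞`, then
there is a constant `c > 0` such that for every positive integer `a`,
`(1/√a) ∑_{k≥1} ‖E₀(S_{ak})‖/k^{3/2} ≤ c ∑_{l≥a} ‖E₀(S_l)‖/l^{3/2}`. -/
theorem stmt17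
    {Ω : Type*} [m0 : MeasurableSpace Ω] {μ : Measure Ω} [IsProbabilityMeasure μ]
    (T : Ω ≃ᵐ Ω) (hT : MeasurePreserving T μ μ)
    {F0 : MeasurableSpace Ω} (hF0 : F0 ≤ m0) (hF0T : F0 ≤ F0.comap T)
    {X0 : Ω → ℝ} (hX0m : StronglyMeasurable[F0] X0) (hX0L2 : MemLp X0 2 μ)
    (hX0c : ∫ ω, X0 ω ∂μ = 0)
    (S : ℕ → Ω → ℝ) (hS : ∀ n ω, S n ω = ∑ i ∈ Finset.range n, X0 ((⇑T)^[i] ω))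
    (hΔ : Summable fun n : ℕ =>
      (eLpNorm (μ[S (n + 1)|F0]) 2 μ).toReal / ((n : ℝ) + 1) ^ (3 / 2 : ℝ)) :
    ∃ c > (0 : ℝ), ∀ a : ℕ, 1 ≤ a →
      (1 / Real.sqrt a) *
          ∑' k : ℕ, (eLpNorm (μ[S (a * (k + 1))|F0]) 2 μ).toReal
            / ((k : ℝ) + 1) ^ (3 / 2 : ℝ) ≤
        c * ∑' l : ℕ, (eLpNorm (μ[S (a + l)|F0]) 2 μ).toReal
            / ((a : ℝ) + l) ^ (3 / 2 : ℝ) := by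
  obtain ⟨c, hc, hmain⟩ := stmt17_analytic (fun n => (eLpNorm (μ[S n|F0]) 2 μ).toReal)
    (fun n => ENNReal.toReal_nonneg)
    (fun n m => stmt17_key (m0 := m0) T hT hF0 hF0T hX0L2 S hS n m) hΔ
  exact ⟨c, hc, hmain⟩
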